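/- Let J : [0,1] → ℝⁿ satisfy ‖J''(t)‖ ≤ δ‖J(t)‖ with J(0) = 0 and J(1) = a, and suppose ‖J(t)‖ ≤ 2‖a‖ on [0,1] and δ ≤ 10⁻². Then |⟨J(1), J'(1)⟩ − ‖a‖²| ≤ Cδ‖a‖² for an absolute constant C. -/

import Mathlib

open Set
open scoped RealInnerProductSpace

theorem stmt18 :
    ∃ C > (0:ℝ), ∀ (n : ℕ) (δ : ℝ), 0 < δ → δ ≤ 1 / 100 →
      ∀ (a : EuclideanSpace ℝ (Fin n)) (J J' J'' : ℝ → EuclideanSpace ℝ (Fin n)),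
        (∀ t ∈ Icc (0:ℝ) 1, HasDerivAt J (J' t) t) →
        (∀ t ∈ Icc (0:ℝ) 1, HasDerivAt J' (J'' t) t) →
        (∀ t ∈ Icc (0:ℝ) 1, ‖J'' t‖ ≤ δ * ‖J t‖) →
        J 0 = 0 → J 1 = a →
        (∀ t ∈ Icc (0:ℝ) 1, ‖J t‖ ≤ 2 * ‖a‖) →
        |⟪J 1, J' 1⟫ - ‖a‖ ^ 2| ≤ C * δ * ‖a‖ ^ 2 := by
  refine ⟨2, by norm_num, ?_⟩
  intro n δ hδ hδ1 a J J' J'' hJ hJ' hJ'' h0 h1 hbd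
  set g : ℝ → EuclideanSpace ℝ (Fin n) := fun t => J t - t • J' t with hg
  have hgd : ∀ t ∈ Icc (0:ℝ) 1,
      HasDerivWithinAt g (-(t • J'' t)) (Icc (0:ℝ) 1) t := by
    intro t ht
    have h : HasDerivAt g (J' t - (id t • J'' t + (1:ℝ) • J' t)) t := ((hJ t ht).sub ((hasDerivAt_id t).smul (hJ' t ht)))
    have h2 : HasDerivAt g (-(t • J'' t)) t := by
      convert h using 1
      simp only [id_eq, one_smul]
      abel

    exact h2.hasDerivWithinAt
  have hbound : ∀ t ∈ Icc (0:ℝ) 1, ‖-(t • J'' t)‖ ≤ 2 * δ * ‖a‖ := by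
    intro t ht
    rw [norm_neg, norm_smul]
    have h1t : ‖t‖ ≤ 1 := by
      rw [Real.norm_eq_abs, abs_le]; exact ⟨by linarith [ht.1], ht.2⟩
    calc ‖t‖ * ‖J'' t‖ ≤ 1 * (δ * (2 * ‖a‖)) := by
          apply mul_le_mul h1t _ (norm_nonneg _) zero_le_one
          exact (hJ'' t ht).trans (by
            have := hbd t ht
            nlinarith [norm_nonneg (J t)])
      _ = 2 * δ * ‖a‖ := by ring
  have key : ‖g 1 - g 0‖ ≤ 2 * δ * ‖a‖ * ‖(1:ℝ) - 0‖ :=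
    Convex.norm_image_sub_le_of_norm_hasDerivWithin_le hgd hbound (convex_Icc 0 1)
      (by norm_num) (by norm_num)
  have hg1 : g 1 - g 0 = a - J' 1 := by
    simp [hg, h0, h1]
  rw [hg1] at key
  have hkey : ‖a - J' 1‖ ≤ 2 * δ * ‖a‖ := by simpa using key
  have heq : ⟪J 1, J' 1⟫ - ‖a‖ ^ 2 = -⟪a, a - J' 1⟫ := by
    rw [h1, inner_sub_right, real_inner_self_eq_norm_sq]; ring
  rw [heq, abs_neg]
  calc |⟪a, a - J' 1⟫| ≤ ‖a‖ * ‖a - J' 1‖ := abs_real_inner_le_norm _ _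
    _ ≤ ‖a‖ * (2 * δ * ‖a‖) := by
        exact mul_le_mul_of_nonneg_left hkey (norm_nonneg _)
    _ = 2 * δ * ‖a‖ ^ 2 := by ring
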